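/- Let X₁, …, X_n be independent, identically distributed real random variables on a probability space, let S₀ := 0 and S_k := X₁ + ⋯ + X_k for 1 ≤ k ≤ n, and set D := min_{1 ≤ k ≤ n} min{P(S_k > 0), P(S_k < 0)}. Then for every a > 0: (i) P(S_n > a) ≥ D·P(max_{1 ≤ k ≤ n} S_k > a), and (ii) P(S_n < −a) ≥ D·P(min_{1 ≤ k ≤ n} S_k < −a). -/

import Mathlib

open MeasureTheory Filter Topology ProbabilityTheory
section helpers
open Finset


section aux
variable {Ω : Type*} [MeasurableSpace Ω] {P : Measure Ω} [IsProbabilityMeasure P]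

lemma rw_identDistrib_add {f g f' g' : Ω → ℝ} (hf : Measurable f) (hg : Measurable g)
    (hf' : Measurable f') (hg' : Measurable g')
    (hfg : IndepFun f g P) (hfg' : IndepFun f' g' P)
    (h1 : IdentDistrib f f' P P) (h2 : IdentDistrib g g' P P) :
    IdentDistrib (fun ω => f ω + g ω) (fun ω => f' ω + g' ω) P P := by
  have hpair : IdentDistrib (fun ω => (f ω, g ω)) (fun ω => (f' ω, g' ω)) P P := by
    refine ⟨(hf.prodMk hg).aemeasurable, (hf'.prodMk hg').aemeasurable, ?_⟩
    rw [(indepFun_iff_map_prod_eq_prod_map_map hf.aemeasurable hg.aemeasurable).1 hfg,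
        (indepFun_iff_map_prod_eq_prod_map_map hf'.aemeasurable hg'.aemeasurable).1 hfg',
        h1.map_eq, h2.map_eq]
  exact hpair.comp measurable_add

lemma rw_identDistrib_sum {n : ℕ} {X : Fin n → Ω → ℝ} (hXmeas : ∀ i, Measurable (X i))
    (hindep : iIndepFun X P)
    (hident : ∀ i j, P.map (X i) = P.map (X j)) :
    ∀ (m : ℕ) (s t : Finset (Fin n)), s.card = m → t.card = m →
      IdentDistrib (fun ω => ∑ i ∈ s, X i ω) (fun ω => ∑ i ∈ t, X i ω) P P := by
  intro m
  induction m with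
  | zero =>
    intro s t hs ht
    rw [card_eq_zero] at hs ht; subst hs; subst ht
    simp only [Finset.sum_empty]
    exact IdentDistrib.refl aemeasurable_const
  | succ m ih =>
    intro s t hs ht
    obtain ⟨a, ha⟩ : s.Nonempty := card_pos.1 (by omega)
    obtain ⟨b, hb⟩ : t.Nonempty := card_pos.1 (by omega)
    have hmeas_sum : ∀ u : Finset (Fin n), Measurable (fun ω => ∑ i ∈ u, X i ω) :=
      fun u => Finset.measurable_sum u (fun i _ => hXmeas i)
    have hind1 : IndepFun (X a) (fun ω => ∑ i ∈ s.erase a, X i ω) P := by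
      have := (hindep.indepFun_finsetSum_of_notMem hXmeas (s := s.erase a) (i := a)
        (Finset.notMem_erase a s)).symm
      have he : (∑ j ∈ s.erase a, X j) = fun ω => ∑ i ∈ s.erase a, X i ω := by
        funext ω; simp [Finset.sum_apply]
      rwa [he] at this
    have hind2 : IndepFun (X b) (fun ω => ∑ i ∈ t.erase b, X i ω) P := by
      have := (hindep.indepFun_finsetSum_of_notMem hXmeas (s := t.erase b) (i := b)
        (Finset.notMem_erase b t)).symm
      have he : (∑ j ∈ t.erase b, X j) = fun ω => ∑ i ∈ t.erase b, X i ω := by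
        funext ω; simp [Finset.sum_apply]
      rwa [he] at this
    have hXab : IdentDistrib (X a) (X b) P P :=
      ⟨(hXmeas a).aemeasurable, (hXmeas b).aemeasurable, hident a b⟩
    have hrest : IdentDistrib (fun ω => ∑ i ∈ s.erase a, X i ω)
        (fun ω => ∑ i ∈ t.erase b, X i ω) P P :=
      ih _ _ (by rw [Finset.card_erase_of_mem ha, hs]; omega) (by rw [Finset.card_erase_of_mem hb, ht]; omega)
    have h := rw_identDistrib_add (hXmeas a) (hmeas_sum _) (hXmeas b) (hmeas_sum _)
      hind1 hind2 hXab hrest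
    have e1 : (fun ω => X a ω + ∑ i ∈ s.erase a, X i ω) = fun ω => ∑ i ∈ s, X i ω := by
      funext ω; exact Finset.add_sum_erase s (fun i => X i ω) ha
    have e2 : (fun ω => X b ω + ∑ i ∈ t.erase b, X i ω) = fun ω => ∑ i ∈ t, X i ω := by
      funext ω; exact Finset.add_sum_erase t (fun i => X i ω) hb
    rwa [e1, e2] at h

end aux
section aux2
lemma rw_one_side {Ω : Type*} [MeasurableSpace Ω] (P : Measure Ω) [IsProbabilityMeasure P]
    (n : ℕ) (hn : 1 ≤ n)
    (X : Fin n → Ω → ℝ) (hXmeas : ∀ i, Measurable (X i))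
    (hindep : iIndepFun X P)
    (hident : ∀ i j, P.map (X i) = P.map (X j))
    (S : ℕ → Ω → ℝ)
    (hS : ∀ k ω, S k ω = ∑ i : Fin n, if (i : ℕ) < k then X i ω else 0)
    (D : ℝ) (hD0 : 0 ≤ D) (hD1 : D ≤ 1)
    (hD : ∀ k, 1 ≤ k → k ≤ n → D ≤ (P {ω | 0 < S k ω}).toReal)
    (a : ℝ) (ha : 0 < a) :
    D * (P {ω | a < (Finset.Icc 1 n).sup' (Finset.nonempty_Icc.mpr hn)
        (fun k => S k ω)}).toReal ≤ (P {ω | a < S n ω}).toReal := by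
  classical
  -- measurability of S
  have hSmeas : ∀ k, Measurable (S k) := by
    intro k
    have : S k = fun ω => ∑ i : Fin n, if (i : ℕ) < k then X i ω else 0 := by
      funext ω; exact hS k ω
    rw [this]
    apply Finset.measurable_sum
    intro i _
    by_cases h : (i : ℕ) < k <;> simp [h, hXmeas i, measurable_const]
  -- the tail sums
  set Tl : ℕ → Ω → ℝ := fun k ω => ∑ i : Fin n, if k ≤ (i : ℕ) then X i ω else 0 with hTl
  have hTlmeas : ∀ k, Measurable (Tl k) := by
    intro k
    apply Finset.measurable_sum
    intro i _
    by_cases h : k ≤ (i : ℕ) <;> simp [h, hXmeas i, measurable_const]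
  -- events
  set A : ℕ → Set Ω := fun k => {ω | a < S k ω ∧ ∀ j, 1 ≤ j → j < k → S j ω ≤ a} with hA
  set B : ℕ → Set Ω := fun k => {ω | 0 ≤ Tl k ω} with hB
  have hAmeas : ∀ k, MeasurableSet (A k) := by
    intro k
    have : A k = {ω | a < S k ω} ∩ ⋂ j ∈ Finset.Ico 1 k, {ω | S j ω ≤ a} := by
      ext ω
      simp only [hA, Set.mem_setOf_eq, Set.mem_inter_iff, Set.mem_iInter, Finset.mem_Ico]
      tauto
    rw [this]
    exact (measurableSet_lt measurable_const (hSmeas k)).inter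
      (MeasurableSet.biInter (Finset.Ico 1 k).countable_toSet
        (fun j _ => measurableSet_le (hSmeas j) measurable_const))
  have hBmeas : ∀ k, MeasurableSet (B k) :=
    fun k => measurableSet_le measurable_const (hTlmeas k)
  -- decomposition of the sup event
  have hsup : {ω | a < (Finset.Icc 1 n).sup' (Finset.nonempty_Icc.mpr hn) (fun k => S k ω)}
      = ⋃ k ∈ Finset.Icc 1 n, A k := by
    ext ω
    simp only [Set.mem_setOf_eq, Finset.lt_sup'_iff, Set.mem_iUnion, Finset.mem_Icc, hA,
      exists_prop]
    constructor
    · rintro ⟨k, ⟨hk1, hk2⟩, hka⟩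
      have hex : ∃ m, 1 ≤ m ∧ m ≤ n ∧ a < S m ω := ⟨k, hk1, hk2, hka⟩
      set k0 := Nat.find hex with hk0def
      obtain ⟨h1, h2, h3⟩ := Nat.find_spec hex
      refine ⟨k0, ⟨h1, h2⟩, h3, ?_⟩
      intro j hj1 hjk0
      by_contra hcon
      push_neg at hcon
      exact Nat.find_min hex hjk0 ⟨hj1, by omega, hcon⟩
    · rintro ⟨k, ⟨hk1, hk2⟩, hka, _⟩
      exact ⟨k, ⟨hk1, hk2⟩, hka⟩
  -- pairwise disjointness of the A's (hence of A ∩ B)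
  have hdisjA : ∀ k ∈ Finset.Icc 1 n, ∀ l ∈ Finset.Icc 1 n, k ≠ l →
      Disjoint (A k) (A l) := by
    intro k hk l hl hkl
    rw [Set.disjoint_left]
    intro ω hωk hωl
    simp only [Finset.mem_Icc] at hk hl
    rcases Nat.lt_or_ge k l with h | h
    · exact absurd hωk.1 (not_lt.2 (hωl.2 k hk.1 h))
    · have h' : l < k := by omega
      exact absurd hωl.1 (not_lt.2 (hωk.2 l (by omega) h'))
  -- independence : P(A k ∩ B k) = P(A k) * P(B k)
  have hindAB : ∀ k, 1 ≤ k → k ≤ n → P (A k ∩ B k) = P (A k) * P (B k) := by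
    intro k hk1 hk2
    set s : Finset (Fin n) := Finset.univ.filter (fun i : Fin n => (i : ℕ) < k) with hsdef
    set t : Finset (Fin n) := Finset.univ.filter (fun i : Fin n => k ≤ (i : ℕ)) with htdef
    have hst : Disjoint s t := by
      rw [Finset.disjoint_left]
      intro i hi hi'
      simp only [hsdef, htdef, Finset.mem_filter] at hi hi'
      omega
    have hIF := hindep.indepFun_finset s t hst hXmeas
    -- the partial-sum functionals on the tuple spaces
    set gS : ℕ → ({x // x ∈ s} → ℝ) → ℝ :=
      fun j v => ∑ i : {x // x ∈ s}, if ((i : Fin n) : ℕ) < j then v i else 0 with hgSdef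
    have hgSmeas : ∀ j, Measurable (gS j) := by
      intro j
      apply Finset.measurable_sum
      intro i _
      by_cases h : ((i : Fin n) : ℕ) < j <;> simp [h, measurable_pi_apply, measurable_const]
    have hgS : ∀ j, j ≤ k → ∀ ω, gS j (fun i => X i ω) = S j ω := by
      intro j hj ω
      rw [hS]
      simp only [hgSdef]
      rw [Finset.univ_eq_attach,
        Finset.sum_attach s (fun i => if (i : ℕ) < j then X i ω else 0)]
      apply Finset.sum_subset (Finset.subset_univ s)
      intro i _ hi
      simp only [hsdef, Finset.mem_filter, Finset.mem_univ, true_and] at hi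
      have : ¬ ((i : ℕ) < j) := by omega
      simp [this]
    set gT : ({x // x ∈ t} → ℝ) → ℝ := fun v => ∑ i : {x // x ∈ t}, v i with hgTdef
    have hgTmeas : Measurable gT :=
      Finset.measurable_sum _ (fun i _ => measurable_pi_apply i)
    have hgT : ∀ ω, gT (fun i => X i ω) = Tl k ω := by
      intro ω
      simp only [hgTdef, hTl]
      rw [Finset.univ_eq_attach, Finset.sum_attach t (fun i => X i ω), htdef,
        Finset.sum_filter]
    set CA : Set ({x // x ∈ s} → ℝ) :=
      {v | a < gS k v ∧ ∀ j ∈ Finset.Ico 1 k, gS j v ≤ a} with hCAdef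
    have hCAmeas : MeasurableSet CA := by
      have : CA = {v | a < gS k v} ∩ ⋂ j ∈ Finset.Ico 1 k, {v | gS j v ≤ a} := by
        ext v
        simp only [hCAdef, Set.mem_setOf_eq, Set.mem_inter_iff, Set.mem_iInter]
      rw [this]
      exact (measurableSet_lt measurable_const (hgSmeas k)).inter
        (MeasurableSet.biInter (Finset.Ico 1 k).countable_toSet
          (fun j _ => measurableSet_le (hgSmeas j) measurable_const))
    set CB : Set ({x // x ∈ t} → ℝ) := {v | 0 ≤ gT v} with hCBdef
    have hCBmeas : MeasurableSet CB := measurableSet_le measurable_const hgTmeas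
    have hApre : A k = (fun ω (i : {x // x ∈ s}) => X i ω) ⁻¹' CA := by
      ext ω
      simp only [hA, Set.mem_setOf_eq, Set.mem_preimage, hCAdef, Finset.mem_Ico]
      rw [hgS k le_rfl]
      constructor
      · rintro ⟨h1, h2⟩
        refine ⟨h1, fun j hj => ?_⟩
        rw [hgS j (le_of_lt hj.2)]
        exact h2 j hj.1 hj.2
      · rintro ⟨h1, h2⟩
        refine ⟨h1, fun j hj1 hj2 => ?_⟩
        have := h2 j ⟨hj1, hj2⟩
        rwa [hgS j (le_of_lt hj2)] at this
    have hBpre : B k = (fun ω (i : {x // x ∈ t}) => X i ω) ⁻¹' CB := by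
      ext ω
      simp only [hB, Set.mem_setOf_eq, Set.mem_preimage, hCBdef]
      rw [hgT]
    rw [hApre, hBpre]
    exact (indepFun_iff_measure_inter_preimage_eq_mul.1 hIF) CA CB hCAmeas hCBmeas
  -- cardinalities
  have hcard_s : ∀ m, m ≤ n → (Finset.univ.filter (fun i : Fin n => (i : ℕ) < m)).card = m := by
    intro m hm
    have : Finset.univ.filter (fun i : Fin n => (i : ℕ) < m)
        = (Finset.range m).attachFin (fun x hx => lt_of_lt_of_le (Finset.mem_range.1 hx) hm) := by
      ext i
      simp [Finset.mem_attachFin, Finset.mem_range]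
    rw [this, Finset.card_attachFin, Finset.card_range]
  have hcard_t : ∀ k, k ≤ n → (Finset.univ.filter (fun i : Fin n => k ≤ (i : ℕ))).card = n - k := by
    intro k hk
    have heq : Finset.univ.filter (fun i : Fin n => k ≤ (i : ℕ))
        = Finset.univ.filter (fun i : Fin n => ¬ ((i : ℕ) < k)) := by
      apply Finset.filter_congr
      intro i _
      simp [not_lt]
    have hsum := Finset.card_filter_add_card_filter_not
      (s := (Finset.univ : Finset (Fin n))) (p := fun i : Fin n => (i : ℕ) < k)
    rw [Finset.card_univ, Fintype.card_fin] at hsum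
    rw [heq]
    have := hcard_s k hk
    omega
  -- the lower bound on P(B k)
  have hBbound : ∀ k, 1 ≤ k → k ≤ n → D ≤ (P (B k)).toReal := by
    intro k hk1 hk2
    rcases eq_or_lt_of_le hk2 with hkn | hkn
    · -- k = n : B n = univ
      have : B k = Set.univ := by
        ext ω
        simp only [hB, Set.mem_setOf_eq, Set.mem_univ, iff_true]
        have : Tl k ω = 0 := by
          simp only [hTl]
          apply Finset.sum_eq_zero
          intro i _
          have : ¬ k ≤ (i : ℕ) := by have := i.is_lt; omega
          simp [this]
        rw [this]
      rw [this, measure_univ]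
      simpa using hD1
    · -- k < n : use identical distribution of the tail with S (n-k)
      set t : Finset (Fin n) := Finset.univ.filter (fun i : Fin n => k ≤ (i : ℕ)) with htdef
      set s' : Finset (Fin n) := Finset.univ.filter (fun i : Fin n => (i : ℕ) < n - k) with hs'def
      have hid : IdentDistrib (fun ω => ∑ i ∈ t, X i ω) (fun ω => ∑ i ∈ s', X i ω) P P :=
        rw_identDistrib_sum hXmeas hindep hident (n - k) t s'
          (hcard_t k hk2) (hcard_s (n - k) (by omega))
      have h1 : ∀ ω, Tl k ω = ∑ i ∈ t, X i ω := by
        intro ω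
        simp only [hTl, htdef]
        rw [Finset.sum_filter]
      have h2 : ∀ ω, S (n - k) ω = ∑ i ∈ s', X i ω := by
        intro ω
        rw [hS]
        simp only [hs'def]
        rw [Finset.sum_filter]
      have hmt : Measurable (fun ω => ∑ i ∈ t, X i ω) :=
        Finset.measurable_sum t (fun i _ => hXmeas i)
      have hms' : Measurable (fun ω => ∑ i ∈ s', X i ω) :=
        Finset.measurable_sum s' (fun i _ => hXmeas i)
      have hmsIci : MeasurableSet {x : ℝ | 0 ≤ x} :=
        measurableSet_le measurable_const measurable_id
      have hPB : P (B k) = P {ω | 0 ≤ S (n - k) ω} := by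
        calc P (B k) = P ((fun ω => ∑ i ∈ t, X i ω) ⁻¹' {x | 0 ≤ x}) := by
              congr 1
              ext ω
              simp [hB, h1 ω]
          _ = P.map (fun ω => ∑ i ∈ t, X i ω) {x | 0 ≤ x} :=
              (Measure.map_apply hmt hmsIci).symm
          _ = P.map (fun ω => ∑ i ∈ s', X i ω) {x | 0 ≤ x} := by rw [hid.map_eq]
          _ = P ((fun ω => ∑ i ∈ s', X i ω) ⁻¹' {x | 0 ≤ x}) :=
              Measure.map_apply hms' hmsIci
          _ = P {ω | 0 ≤ S (n - k) ω} := by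
              congr 1
              ext ω
              simp [h2 ω]
      have hmono : P {ω | 0 < S (n - k) ω} ≤ P {ω | 0 ≤ S (n - k) ω} := by
        apply measure_mono
        intro ω h
        simp only [Set.mem_setOf_eq] at h ⊢
        exact le_of_lt h
      calc D ≤ (P {ω | 0 < S (n - k) ω}).toReal := hD (n - k) (by omega) (by omega)
        _ ≤ (P {ω | 0 ≤ S (n - k) ω}).toReal :=
            ENNReal.toReal_mono (measure_ne_top P _) hmono
        _ = (P (B k)).toReal := by rw [hPB]
  -- subset of the terminal event
  have hsub : (⋃ k ∈ Finset.Icc 1 n, (A k ∩ B k)) ⊆ {ω | a < S n ω} := by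
    intro ω hω
    simp only [Set.mem_iUnion, Finset.mem_Icc, exists_prop] at hω
    obtain ⟨k, ⟨hk1, hk2⟩, hωA, hωB⟩ := hω
    have hdecomp : S n ω = S k ω + Tl k ω := by
      rw [hS, hS]
      simp only [hTl]
      rw [← Finset.sum_add_distrib]
      apply Finset.sum_congr rfl
      intro i _
      have hi : (i : ℕ) < n := i.is_lt
      by_cases h : (i : ℕ) < k
      · have : ¬ k ≤ (i : ℕ) := by omega
        simp [h, hi, this]
      · have : k ≤ (i : ℕ) := by omega
        simp [h, hi, this]
    have h1 : a < S k ω := hωA.1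
    have h2 : (0 : ℝ) ≤ Tl k ω := hωB
    simp only [Set.mem_setOf_eq]
    rw [hdecomp]
    linarith
  -- pairwise disjointness of the intersections
  have hPD : (↑(Finset.Icc 1 n) : Set ℕ).PairwiseDisjoint (fun k => A k ∩ B k) := by
    intro x hx y hy hxy
    simp only [Finset.coe_Icc, Set.mem_Icc] at hx hy
    exact ((hdisjA x (Finset.mem_Icc.2 hx) y (Finset.mem_Icc.2 hy) hxy).mono
      Set.inter_subset_left Set.inter_subset_left)
  have hPDA : (↑(Finset.Icc 1 n) : Set ℕ).PairwiseDisjoint A := by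
    intro x hx y hy hxy
    simp only [Finset.coe_Icc, Set.mem_Icc] at hx hy
    exact hdisjA x (Finset.mem_Icc.2 hx) y (Finset.mem_Icc.2 hy) hxy
  have hUnionAB : P (⋃ k ∈ Finset.Icc 1 n, (A k ∩ B k))
      = ∑ k ∈ Finset.Icc 1 n, P (A k ∩ B k) :=
    measure_biUnion_finset hPD (fun k _ => (hAmeas k).inter (hBmeas k))
  have hUnionA : P (⋃ k ∈ Finset.Icc 1 n, A k) = ∑ k ∈ Finset.Icc 1 n, P (A k) :=
    measure_biUnion_finset hPDA (fun k _ => hAmeas k)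
  -- put everything together, in real numbers
  have hchain : D * (P {ω | a < (Finset.Icc 1 n).sup' (Finset.nonempty_Icc.mpr hn)
      (fun k => S k ω)}).toReal = D * ∑ k ∈ Finset.Icc 1 n, (P (A k)).toReal := by
    rw [hsup, hUnionA, ENNReal.toReal_sum (fun k _ => measure_ne_top P _)]
  rw [hchain, Finset.mul_sum]
  calc ∑ k ∈ Finset.Icc 1 n, D * (P (A k)).toReal
      ≤ ∑ k ∈ Finset.Icc 1 n, (P (A k ∩ B k)).toReal := by
        apply Finset.sum_le_sum
        intro k hk
        simp only [Finset.mem_Icc] at hk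
        rw [hindAB k hk.1 hk.2, ENNReal.toReal_mul]
        have := hBbound k hk.1 hk.2
        have h0 : (0 : ℝ) ≤ (P (A k)).toReal := ENNReal.toReal_nonneg
        calc D * (P (A k)).toReal ≤ (P (B k)).toReal * (P (A k)).toReal :=
              mul_le_mul_of_nonneg_right this h0
          _ = (P (A k)).toReal * (P (B k)).toReal := mul_comm _ _
    _ = (P (⋃ k ∈ Finset.Icc 1 n, (A k ∩ B k))).toReal := by
        rw [hUnionAB, ENNReal.toReal_sum (fun k _ => measure_ne_top P _)]
    _ ≤ (P {ω | a < S n ω}).toReal :=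
        ENNReal.toReal_mono (measure_ne_top P _) (measure_mono hsub)
end aux2

end helpers

/-- Reflection-principle lemma (Section 5), random-walk form: for an i.i.d. random walk
`S_k = X₁ + ⋯ + X_k` with `D = min_{1 ≤ k ≤ n} min{P(S_k > 0), P(S_k < 0)}`, the terminal
tail dominates `D` times the running-maximum (resp. running-minimum) tail:
`P(S_n > a) ≥ D·P(max_{1 ≤ k ≤ n} S_k > a)` and
`P(S_n < -a) ≥ D·P(min_{1 ≤ k ≤ n} S_k < -a)` for every `a > 0`. -/
theorem random_walk_reflection_principle
    {Ω : Type*} [MeasurableSpace Ω] (P : Measure Ω) [IsProbabilityMeasure P]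
    (n : ℕ) (hn : 1 ≤ n)
    (X : Fin n → Ω → ℝ) (hXmeas : ∀ i, Measurable (X i))
    (hindep : iIndepFun X P)
    (hident : ∀ i j, P.map (X i) = P.map (X j))
    (S : ℕ → Ω → ℝ)
    (hS : ∀ k ω, S k ω = ∑ i : Fin n, if (i : ℕ) < k then X i ω else 0)
    (D : ℝ)
    (hD : D = (Finset.Icc 1 n).inf' (Finset.nonempty_Icc.mpr hn)
      (fun k => min (P {ω | 0 < S k ω}).toReal (P {ω | S k ω < 0}).toReal)) :
    ∀ a > (0 : ℝ),
      D * (P {ω | a < (Finset.Icc 1 n).sup' (Finset.nonempty_Icc.mpr hn)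
              (fun k => S k ω)}).toReal
          ≤ (P {ω | a < S n ω}).toReal
      ∧ D * (P {ω | (Finset.Icc 1 n).inf' (Finset.nonempty_Icc.mpr hn)
              (fun k => S k ω) < -a}).toReal
          ≤ (P {ω | S n ω < -a}).toReal := by
  intro a ha
  have hD0 : 0 ≤ D := by
    rw [hD]
    apply Finset.le_inf'
    intro k _
    exact le_min ENNReal.toReal_nonneg ENNReal.toReal_nonneg
  have hD1 : D ≤ 1 := by
    rw [hD]
    have h1 : (1 : ℕ) ∈ Finset.Icc 1 n := Finset.mem_Icc.2 ⟨le_rfl, hn⟩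
    refine le_trans (Finset.inf'_le _ h1) (le_trans (min_le_left _ _) ?_)
    have hle : P {ω | 0 < S 1 ω} ≤ 1 := prob_le_one
    simpa using ENNReal.toReal_mono ENNReal.one_ne_top hle
  have hDpos : ∀ k, 1 ≤ k → k ≤ n → D ≤ (P {ω | 0 < S k ω}).toReal := by
    intro k hk1 hk2
    rw [hD]
    exact le_trans (Finset.inf'_le _ (Finset.mem_Icc.2 ⟨hk1, hk2⟩)) (min_le_left _ _)
  have hDneg : ∀ k, 1 ≤ k → k ≤ n → D ≤ (P {ω | S k ω < 0}).toReal := by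
    intro k hk1 hk2
    rw [hD]
    exact le_trans (Finset.inf'_le _ (Finset.mem_Icc.2 ⟨hk1, hk2⟩)) (min_le_right _ _)
  constructor
  · exact rw_one_side P n hn X hXmeas hindep hident S hS D hD0 hD1 hDpos a ha
  · -- apply the one-sided lemma to the negated walk
    have hYmeas : ∀ i, Measurable (fun ω => -X i ω) := fun i => (hXmeas i).neg
    have hYindep : iIndepFun (fun i ω => -X i ω) P :=
      hindep.comp (fun _ => (fun x : ℝ => -x)) (fun _ => measurable_neg)
    have hYident : ∀ i j, P.map (fun ω => -X i ω) = P.map (fun ω => -X j ω) := by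
      intro i j
      have hmap : ∀ i, P.map (fun ω => -X i ω) = (P.map (X i)).map (fun x : ℝ => -x) :=
        fun i => (Measure.map_map measurable_neg (hXmeas i)).symm
      rw [hmap i, hmap j, hident i j]
    have hS' : ∀ k ω, (fun k ω => -S k ω) k ω
        = ∑ i : Fin n, if (i : ℕ) < k then (fun i ω => -X i ω) i ω else 0 := by
      intro k ω
      simp only
      rw [hS, ← Finset.sum_neg_distrib]
      apply Finset.sum_congr rfl
      intro i _
      by_cases h : (i : ℕ) < k <;> simp [h]
    have hD' : ∀ k, 1 ≤ k → k ≤ n → D ≤ (P {ω | 0 < (fun k ω => -S k ω) k ω}).toReal := by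
      intro k hk1 hk2
      have hseteq : {ω | 0 < (fun k ω => -S k ω) k ω} = {ω | S k ω < 0} := by
        ext ω
        simp [neg_pos]
      rw [hseteq]
      exact hDneg k hk1 hk2
    have key := rw_one_side P n hn (fun i ω => -X i ω) hYmeas hYindep hYident
      (fun k ω => -S k ω) hS' D hD0 hD1 hD' a ha
    have hset1 : {ω | a < (Finset.Icc 1 n).sup' (Finset.nonempty_Icc.mpr hn)
        (fun k => (fun k ω => -S k ω) k ω)}
        = {ω | (Finset.Icc 1 n).inf' (Finset.nonempty_Icc.mpr hn) (fun k => S k ω) < -a} := by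
      ext ω
      simp only [Set.mem_setOf_eq, Finset.lt_sup'_iff, Finset.inf'_lt_iff]
      constructor
      · rintro ⟨k, hk, h⟩
        exact ⟨k, hk, by linarith⟩
      · rintro ⟨k, hk, h⟩
        exact ⟨k, hk, by linarith⟩
    have hset2 : {ω | a < (fun k ω => -S k ω) n ω} = {ω | S n ω < -a} := by
      ext ω
      simp only [Set.mem_setOf_eq]
      constructor <;> intro h <;> linarith
    rwa [hset1, hset2] at key
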